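/- arXiv:1606.03328 — 2 statements merged into one kernel-verified Lean document; each statement's English description precedes it below -/
import Mathlib

section
/- Let k be a field of characteristic p > 0 and let V be a nonzero finite-dimensional representation of the cyclic group C_p over k on which C_p acts nontrivially. Then the (p−1)-fold tensor power V^{⊗(p−1)} (with diagonal C_p-action) contains a free k[C_p]-module of rank 1 as a direct summand. -/
open scoped TensorProduct

/-- Diagonal action of a group element on a tensor power, via `PiTensorProduct.map`. -/
noncomputable def diagAction {k V : Type*} [Field k] [AddCommGroup V] [Module k V]
    {G : Type*} [Group G] (ρ : Representation k G V) (m : ℕ) (g : G) :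
    (⨂[k] (_ : Fin m), V) →ₗ[k] ⨂[k] (_ : Fin m), V :=
  PiTensorProduct.map (fun _ => ρ g)

section aux
variable {k V : Type*} [Field k] [AddCommGroup V] [Module k V]
  {G : Type*} [Group G] (ρ : Representation k G V) (m : ℕ)

lemma diagAction_tprod (g : G) (x : Fin m → V) :
    diagAction ρ m g (PiTensorProduct.tprod k x) = PiTensorProduct.tprod k (fun i => ρ g (x i)) :=
  PiTensorProduct.map_tprod _ _

lemma diagAction_mul (g h : G) (t : ⨂[k] (_ : Fin m), V) :
    diagAction ρ m (g * h) t = diagAction ρ m g (diagAction ρ m h t) := by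
  have : diagAction ρ m (g * h) = (diagAction ρ m g) ∘ₗ diagAction ρ m h := by
    unfold diagAction
    rw [← PiTensorProduct.map_comp]
    congr 1
    funext i
    rw [map_mul, Module.End.mul_eq_comp]
  rw [this, LinearMap.comp_apply]

lemma exists_good_vector (hV : Nontrivial V) {p : ℕ} (N : V →ₗ[k] V)
    (hN : N ≠ 0) (hNp : N ^ p = 0) : ∃ w, N w ≠ 0 ∧ N (N w) = 0 := by
  have hex : ∃ n, N ^ n = 0 := ⟨p, hNp⟩
  classical
  set j := Nat.find hex with hj
  have hj0 : N ^ j = 0 := Nat.find_spec hex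
  have hj2 : 2 ≤ j := by
    by_contra hlt
    push_neg at hlt
    interval_cases j
    · obtain ⟨v0, hv0⟩ := exists_ne (0 : V)
      apply hv0
      have := congrArg (fun f => f v0) hj0
      simpa using this
    · exact hN (by simpa using hj0)
  have hj1 : N ^ (j - 1) ≠ 0 := Nat.find_min hex (by omega)
  obtain ⟨u, hu⟩ : ∃ u, (N ^ (j - 1)) u ≠ 0 := by
    by_contra hc
    push_neg at hc
    exact hj1 (LinearMap.ext fun x => hc x)
  refine ⟨(N ^ (j - 2)) u, ?_, ?_⟩
  · have : N ((N ^ (j - 2)) u) = (N ^ (j - 1)) u := by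
      rw [show j - 1 = (j - 2) + 1 by omega, pow_succ', Module.End.mul_apply]
    rw [this]; exact hu
  · have key : N (N ((N ^ (j - 2)) u)) = (N ^ (j - 2 + 1 + 1)) u := by
      rw [pow_succ', pow_succ', Module.End.mul_apply, Module.End.mul_apply]
    rw [key, show j - 2 + 1 + 1 = j by omega, hj0, LinearMap.zero_apply]

lemma exists_dual_pair {w u : V} (h : LinearIndependent k ![w, u]) :
    ∃ α β : V →ₗ[k] k, α w = 1 ∧ α u = 0 ∧ β w = 0 ∧ β u = 1 := by
  classical
  have hwu : w ≠ u := by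
    intro he
    have := h.injective (a₁ := 0) (a₂ := 1) (by simp [he])
    simp at this
  have hs : LinearIndepOn k id (Set.range ![w, u]) :=
    (linearIndepOn_id_range_iff h.injective).mpr h
  set b := Module.Basis.extend hs with hb
  have hwmem : w ∈ hs.extend (Set.subset_univ _) :=
    Module.Basis.subset_extend hs ⟨0, rfl⟩
  have humem : u ∈ hs.extend (Set.subset_univ _) :=
    Module.Basis.subset_extend hs ⟨1, rfl⟩
  have key : ∀ i jx : ↥(hs.extend (Set.subset_univ _)),
      b.coord i (b jx) = if jx = i then 1 else 0 := by
    intro i jx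
    rw [Module.Basis.coord_apply, Module.Basis.repr_self, Finsupp.single_apply]
  have hne : (⟨u, humem⟩ : ↥(hs.extend (Set.subset_univ _))) ≠ ⟨w, hwmem⟩ := by
    simp [Subtype.ext_iff]; exact fun h => hwu h.symm
  have hne' : (⟨w, hwmem⟩ : ↥(hs.extend (Set.subset_univ _))) ≠ ⟨u, humem⟩ := by
    simp [Subtype.ext_iff]; exact hwu
  refine ⟨b.coord ⟨w, hwmem⟩, b.coord ⟨u, humem⟩, ?_, ?_, ?_, ?_⟩
  · have := key ⟨w, hwmem⟩ ⟨w, hwmem⟩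
    rw [Module.Basis.extend_apply_self] at this
    simpa using this
  · have := key ⟨w, hwmem⟩ ⟨u, humem⟩
    rw [Module.Basis.extend_apply_self] at this
    simpa [hne] using this
  · have := key ⟨u, humem⟩ ⟨w, hwmem⟩
    rw [Module.Basis.extend_apply_self] at this
    simpa [hne'] using this
  · have := key ⟨u, humem⟩ ⟨u, humem⟩
    rw [Module.Basis.extend_apply_self] at this
    simpa using this

lemma prod_ite_pow {k : Type*} [CommRing k] (n m : ℕ) (hm : m ≤ n) (c : k) :
    ∏ i : Fin n, (if (i : ℕ) < m then c else 1) = c ^ m := by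
  classical
  rw [Fin.prod_univ_eq_prod_range (fun i => if i < m then c else 1) n]
  rw [← Finset.prod_filter]
  have : (Finset.range n).filter (· < m) = Finset.range m := by
    ext i; simp [Finset.mem_filter, Finset.mem_range]; omega
  rw [this, Finset.prod_const, Finset.card_range]

end aux

/-- If `V` is a nonzero finite-dimensional representation of `C_p` over a field of
characteristic `p` with nontrivial action, then `V^{⊗(p-1)}` with the diagonal action
contains a free `k[C_p]`-module of rank 1 as a direct summand. -/
theorem stmt_5 {k V : Type*} [Field k] [AddCommGroup V] [Module k V]
    (p : ℕ) [Fact p.Prime] [CharP k p] [FiniteDimensional k V] (hV : Nontrivial V)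
    (ρ : Representation k (Multiplicative (ZMod p)) V)
    (hnontriv : ∃ g, ρ g ≠ LinearMap.id) :
    ∃ (ι : MonoidAlgebra k (Multiplicative (ZMod p)) →ₗ[k] ⨂[k] (_ : Fin (p - 1)), V)
      (π : (⨂[k] (_ : Fin (p - 1)), V) →ₗ[k] MonoidAlgebra k (Multiplicative (ZMod p))),
      (∀ (g : Multiplicative (ZMod p)) (x : MonoidAlgebra k (Multiplicative (ZMod p))),
        ι (MonoidAlgebra.of k (Multiplicative (ZMod p)) g * x) = diagAction ρ (p - 1) g (ι x)) ∧
      (∀ (g : Multiplicative (ZMod p)) (t : ⨂[k] (_ : Fin (p - 1)), V),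
        π (diagAction ρ (p - 1) g t) = MonoidAlgebra.of k (Multiplicative (ZMod p)) g * π t) ∧
      π.comp ι = LinearMap.id := by
  classical
  have hp : p.Prime := Fact.out
  haveI : NeZero p := ⟨hp.ne_zero⟩
  set G := Multiplicative (ZMod p) with hGdef
  obtain ⟨g1, hg1⟩ := hnontriv
  set g₀ : G := Multiplicative.ofAdd 1 with hg₀def
  have hgen : ∀ g : G, g₀ ^ (Multiplicative.toAdd g).val = g := by
    intro g
    have : (Multiplicative.toAdd g).val • (1 : ZMod p) = Multiplicative.toAdd g := by
      rw [nsmul_eq_mul, mul_one, ZMod.natCast_val, ZMod.cast_id]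
    rw [hg₀def, ← ofAdd_nsmul, this, ofAdd_toAdd]
  have hρg₀ : ρ g₀ ≠ LinearMap.id := by
    intro h
    apply hg1
    rw [← hgen g1, map_pow, h]
    ext x
    simp
  have hg₀p : g₀ ^ p = 1 := by
    rw [hg₀def, ← ofAdd_nsmul, nsmul_eq_mul, mul_one, ZMod.natCast_self, ofAdd_zero]
  set N : V →ₗ[k] V := ρ g₀ - LinearMap.id with hNdef
  have hN0 : N ≠ 0 := sub_ne_zero.mpr hρg₀
  obtain ⟨v0, hv0⟩ := exists_ne (0 : V)
  haveI : CharP (V →ₗ[k] V) p :=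
    Module.charP_end ⟨v0, (Submodule.eq_bot_iff _).mpr fun r hr => by
      by_contra hr0
      exact hv0 (by simpa [Ideal.mem_torsionOf_iff, smul_eq_zero, hr0] using hr)⟩
  have hNp : N ^ p = 0 := by
    have hone : (LinearMap.id : V →ₗ[k] V) = 1 := rfl
    rw [hNdef, hone, sub_pow_char_of_commute (p := p) (Commute.one_right _), one_pow,
      ← map_pow, hg₀p, map_one, sub_self]
  obtain ⟨w, hw1, hw2⟩ := exists_good_vector hV N hN0 hNp
  -- basic action facts
  have hNapp : ∀ x, N x = ρ g₀ x - x := by intro x; rw [hNdef]; simp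
  have hρw : ρ g₀ w = w + N w := by rw [hNapp w]; abel
  have hρNw : ρ g₀ (N w) = N w := by
    have h := hNapp (N w)
    rw [hw2] at h
    exact sub_eq_zero.mp h.symm
  have hpow : ∀ n : ℕ, ((ρ g₀) ^ n) w = w + (n : k) • N w := by
    intro n
    induction n with
    | zero => simp
    | succ n ih =>
      rw [pow_succ', Module.End.mul_apply, ih, map_add, map_smul, hρw, hρNw]
      push_cast
      rw [add_smul, one_smul]
      abel
  -- scalars
  set c : ZMod p →+* k := ZMod.castHom dvd_rfl k with hcdef
  have hval : ∀ a : ZMod p, (a.val : k) = c a := by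
    intro a
    rw [hcdef, ZMod.castHom_apply, ZMod.natCast_val]
  have hρg : ∀ g : G, ρ g w = w + c (Multiplicative.toAdd g) • N w := by
    intro g
    conv_lhs => rw [← hgen g, map_pow]
    rw [hpow, hval]
  -- dual pair
  have hindep : LinearIndependent k ![w, N w] := by
    rw [LinearIndependent.pair_iff]
    intro s t hst
    have h1 : s • N w = 0 := by
      have := congrArg N hst
      rw [map_add, map_smul, map_smul, hw2, smul_zero, add_zero, map_zero] at this
      exact this
    have hs0 : s = 0 := by
      rcases smul_eq_zero.mp h1 with h | h
      · exact h
      · exact absurd h hw1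
    refine ⟨hs0, ?_⟩
    rw [hs0, zero_smul, zero_add] at hst
    rcases smul_eq_zero.mp hst with h | h
    · exact h
    · exact absurd h hw1
  obtain ⟨α, β, hαw, hαu, hβw, hβu⟩ := exists_dual_pair hindep
  -- tensor vector
  set v : ⨂[k] (_ : Fin (p - 1)), V := PiTensorProduct.tprod k (fun _ => w) with hvdef
  have hdiagv : ∀ g : G, diagAction ρ (p - 1) g v
      = PiTensorProduct.tprod k (fun _ => w + c (Multiplicative.toAdd g) • N w) := by
    intro g
    rw [hvdef, diagAction_tprod]
    congr 1
    funext i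
    exact hρg g
  -- coordinate functionals
  set F : ℕ → ((⨂[k] (_ : Fin (p - 1)), V) →ₗ[k] k) := fun d =>
    PiTensorProduct.lift ((MultilinearMap.mkPiAlgebra k (Fin (p - 1)) k).compLinearMap
      (fun i => if (i : ℕ) < d then β else α)) with hFdef
  have hF : ∀ (d : ℕ), d ≤ p - 1 → ∀ e : k,
      F d (PiTensorProduct.tprod k (fun _ => w + e • N w)) = e ^ d := by
    intro d hd e
    rw [hFdef]
    simp only [PiTensorProduct.lift.tprod, MultilinearMap.compLinearMap_apply,
      MultilinearMap.mkPiAlgebra_apply]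
    have hterm : ∀ i : Fin (p - 1),
        (if (i : ℕ) < d then β else α) (w + e • N w) = if (i : ℕ) < d then e else 1 := by
      intro i
      split
      · rw [map_add, map_smul, hβw, hβu, smul_eq_mul, mul_one, zero_add]
      · rw [map_add, map_smul, hαw, hαu, smul_eq_mul, mul_zero, add_zero]
    rw [Finset.prod_congr rfl (fun i _ => hterm i)]
    exact prod_ite_pow (p - 1) d hd e
  -- Vandermonde
  set cc : Fin p → k := fun i => c ((i : ℕ) : ZMod p) with hccdef
  have hccinj : Function.Injective cc := by
    intro i j hij
    have : ((i : ℕ) : ZMod p) = ((j : ℕ) : ZMod p) := c.injective hij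
    have hv : (((i : ℕ) : ZMod p)).val = (((j : ℕ) : ZMod p)).val := by rw [this]
    rw [ZMod.val_cast_of_lt i.isLt, ZMod.val_cast_of_lt j.isLt] at hv
    exact Fin.ext hv
  set M : Matrix (Fin p) (Fin p) k := Matrix.vandermonde cc with hMdef
  have hdet : IsUnit M.det := by
    rw [hMdef, Matrix.det_vandermonde]
    apply isUnit_iff_ne_zero.mpr
    apply Finset.prod_ne_zero_iff.mpr
    intro i _
    apply Finset.prod_ne_zero_iff.mpr
    intro j hj
    exact sub_ne_zero.mpr fun hc' => (Finset.mem_Ioi.mp hj).ne' (hccinj hc')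
  have hMinv : M * M⁻¹ = 1 := Matrix.mul_nonsing_inv M hdet
  set z : Fin p := ⟨0, hp.pos⟩ with hzdef
  set f : (⨂[k] (_ : Fin (p - 1)), V) →ₗ[k] k :=
    ∑ d : Fin p, M⁻¹ d z • F (d : ℕ) with hfdef
  have hfv : ∀ g : G, f (diagAction ρ (p - 1) g v) = if g = 1 then 1 else 0 := by
    intro g
    set a : ZMod p := Multiplicative.toAdd g with hadef
    set a' : Fin p := ⟨a.val, a.val_lt⟩ with ha'def
    have hMrow : ∀ d : Fin p, M a' d = (c a) ^ (d : ℕ) := by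
      intro d
      rw [hMdef, Matrix.vandermonde]
      simp only [Matrix.of_apply]
      congr 1
      rw [hccdef]
      simp only [ha'def]
      congr 1
      rw [ZMod.natCast_val, ZMod.cast_id]
    rw [hdiagv g, hfdef, LinearMap.sum_apply]
    simp only [LinearMap.smul_apply]
    have hFd : ∀ d : Fin p, F (d : ℕ) (PiTensorProduct.tprod k (fun _ => w + c a • N w))
        = (c a) ^ (d : ℕ) := fun d => hF (d : ℕ) (by omega) (c a)
    calc (∑ d : Fin p, M⁻¹ d z • F (d : ℕ)
          (PiTensorProduct.tprod k (fun _ => w + c a • N w)))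
        = ∑ d : Fin p, M a' d * M⁻¹ d z := by
          refine Finset.sum_congr rfl fun d _ => ?_
          rw [hFd d, hMrow d, smul_eq_mul, mul_comm]
      _ = (M * M⁻¹) a' z := (Matrix.mul_apply).symm
      _ = if g = 1 then 1 else 0 := by
          rw [hMinv, Matrix.one_apply]
          congr 1
          simp only [eq_iff_iff]
          constructor
          · intro h
            have : a.val = 0 := by
              have := congrArg Fin.val h
              simpa [ha'def, hzdef] using this
            have ha0 : a = 0 := by
              rwa [ZMod.val_eq_zero] at this
            rw [← ofAdd_toAdd g, ← hadef, ha0, ofAdd_zero]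
          · intro h
            have ha0 : a = 0 := by
              rw [hadef, h]
              simp
            rw [ha'def, hzdef]
            ext
            simp [ha0]
  -- the maps
  set ι : MonoidAlgebra k G →ₗ[k] ⨂[k] (_ : Fin (p - 1)), V :=
    (Finsupp.lsum k (fun g : G => LinearMap.toSpanSingleton k _ (diagAction ρ (p - 1) g v))).comp
      (MonoidAlgebra.coeffLinearEquiv k).toLinearMap
    with hιdef
  have hι : ∀ (h : G) (b : k),
      ι (MonoidAlgebra.single h b) = b • diagAction ρ (p - 1) h v := by
    intro h b
    rw [hιdef]
    rw [LinearMap.comp_apply]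
    change (Finsupp.lsum k _) (Finsupp.single h b) = _
    erw [Finsupp.lsum_single]
    rfl
  set π : (⨂[k] (_ : Fin (p - 1)), V) →ₗ[k] MonoidAlgebra k G :=
    ∑ g : G, (MonoidAlgebra.lsingle g⁻¹).comp (f.comp (diagAction ρ (p - 1) g)) with hπdef
  have hπ : ∀ t, π t
      = ∑ g : G, MonoidAlgebra.single g⁻¹ (f (diagAction ρ (p - 1) g t)) := by
    intro t
    rw [hπdef]
    rw [LinearMap.sum_apply]
    rfl
  have hsm : ∀ (g g' : G) (b : k),
      MonoidAlgebra.of k G g * MonoidAlgebra.single g' b = MonoidAlgebra.single (g * g') b := by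
    intro g g' b
    rw [MonoidAlgebra.of_apply, MonoidAlgebra.single_mul_single, one_mul]
  -- equivariance of π
  have hπequiv : ∀ (g : G) (t : ⨂[k] (_ : Fin (p - 1)), V),
      π (diagAction ρ (p - 1) g t) = MonoidAlgebra.of k G g * π t := by
    intro h t
    rw [hπ, hπ, Finset.mul_sum]
    simp only [hsm]
    simp only [← diagAction_mul]
    refine Fintype.sum_equiv (Equiv.mulRight h) _ _ fun x => ?_
    simp only [Equiv.coe_mulRight]
    congr 1
    rw [mul_inv_rev, mul_inv_cancel_left]
  -- equivariance of ι
  have hιequiv : ∀ (g : G) (x : MonoidAlgebra k G),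
      ι (MonoidAlgebra.of k G g * x) = diagAction ρ (p - 1) g (ι x) := by
    intro g x
    induction x using MonoidAlgebra.induction_linear with
    | zero => rw [mul_zero, map_zero, map_zero]
    | add x y hx hy => rw [mul_add, map_add, hx, hy, map_add, map_add]
    | single a b =>
      rw [hsm, hι, hι, map_smul, diagAction_mul]
  -- π v = 1
  have hπv : π v = MonoidAlgebra.single (1 : G) (1 : k) := by
    rw [hπ]
    have key : ∀ g : G, MonoidAlgebra.single g⁻¹ (f (diagAction ρ (p - 1) g v))
        = if g = 1 then MonoidAlgebra.single (1 : G) (1 : k) else 0 := by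
      intro g
      rw [hfv g]
      split
      · rename_i hg; rw [hg]; simp
      · simp
    rw [Finset.sum_congr rfl (fun g _ => key g), Finset.sum_ite_eq']
    simp
  refine ⟨ι, π, hιequiv, hπequiv, ?_⟩
  refine MonoidAlgebra.lhom_ext' fun a => LinearMap.ext_ring ?_
  simp only [LinearMap.comp_apply, MonoidAlgebra.lsingle_apply, LinearMap.id_apply]
  rw [hι, map_smul, one_smul]
  have : diagAction ρ (p - 1) a v = diagAction ρ (p - 1) a (diagAction ρ (p - 1) 1 v) := by
    rw [← diagAction_mul, mul_one]
  rw [this, ← diagAction_mul, mul_one, hπequiv, hπv]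
  rw [show MonoidAlgebra.single (1 : G) (1 : k) = (1 : MonoidAlgebra k G) from rfl, mul_one,
    MonoidAlgebra.of_apply]
end

section
/- Let p be a prime, k a field, α ∈ k, and let V be the k-vector space with basis f₀, f₁, …, f_{p−1}. Define the linear endomorphism N by N(f_i) = Σ_{j=i+1}^{p−1} C(j, i) α^{j−i} f_j (where C(j,i) is the binomial coefficient). Then N^{p−1}(f₀) = (p−1)! · α^{p−1} · f_{p−1}. -/
/-- Number of "surjection chains": `Surj j m` counts chains `0 = i₀ < i₁ < ⋯ < i_m = j`
weighted by products of binomial coefficients. -/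
private def Surj : ℕ → ℕ → ℕ
  | j, 0 => if j = 0 then 1 else 0
  | j, m + 1 => ∑ i ∈ Finset.range j, Nat.choose j i * Surj i m

private lemma surj_eq_zero : ∀ m j, j < m → Surj j m = 0
  | 0, _, h => by omega
  | m + 1, j, h => by
    simp only [Surj]
    refine Finset.sum_eq_zero fun i hi => ?_
    rw [surj_eq_zero m i (by simp only [Finset.mem_range] at hi; omega), mul_zero]

private lemma surj_diag : ∀ m, Surj m m = m.factorial
  | 0 => rfl
  | m + 1 => by
    simp only [Surj]
    rw [Finset.sum_eq_single m]
    · rw [surj_diag m, Nat.choose_succ_self_right, Nat.factorial_succ]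
    · intro i hi hne
      rw [surj_eq_zero m i (by simp only [Finset.mem_range] at hi; omega), mul_zero]
    · simp

theorem stmt_10 {k : Type*} [Field k] (p : ℕ) (hp : 0 < p) (α : k)
    (N : Module.End k (Fin p → k))
    (hN : ∀ i : Fin p, N (Pi.single i 1) =
      fun j : Fin p => if i < j then (Nat.choose j i : k) * α ^ ((j : ℕ) - (i : ℕ)) else 0) :
    (N ^ (p - 1)) (Pi.single (⟨0, hp⟩ : Fin p) 1) =
      Pi.single (⟨p - 1, by omega⟩ : Fin p) ((Nat.factorial (p - 1) : k) * α ^ (p - 1)) := by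
  have key : ∀ m : ℕ, (N ^ m) (Pi.single (⟨0, hp⟩ : Fin p) 1) =
      fun j : Fin p => (Surj (j : ℕ) m : k) * α ^ (j : ℕ) := by
    intro m
    induction m with
    | zero =>
      funext j
      simp only [pow_zero, Module.End.one_apply]
      rcases eq_or_ne j ⟨0, hp⟩ with h | h
      · subst h; simp [Surj]
      · rw [Pi.single_eq_of_ne h]
        have hj : (j : ℕ) ≠ 0 := fun h0 => h (Fin.ext h0)
        simp [Surj, hj]
    | succ m ih =>
      rw [pow_succ', Module.End.mul_apply, ih]
      have hv : (fun j : Fin p => (Surj (j : ℕ) m : k) * α ^ (j : ℕ)) =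
          ∑ i : Fin p, ((Surj (i : ℕ) m : k) * α ^ (i : ℕ)) • (Pi.single i 1 : Fin p → k) := by
        funext j
        rw [Finset.sum_apply]
        simp [Pi.single_apply]
      rw [hv, map_sum]
      funext j
      rw [Finset.sum_apply]
      simp only [map_smul, Pi.smul_apply, hN, smul_eq_mul, mul_ite, mul_zero]
      have h1 : ∑ i : Fin p, (if i < j then
            ((Surj (i : ℕ) m : k) * α ^ (i : ℕ)) *
              ((Nat.choose (j : ℕ) (i : ℕ) : k) * α ^ ((j : ℕ) - (i : ℕ))) else 0)
          = ∑ i ∈ Finset.range p, (if i < (j : ℕ) then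
            ((Surj i m : k) * α ^ i) *
              ((Nat.choose (j : ℕ) i : k) * α ^ ((j : ℕ) - i)) else 0) := by
        rw [← Fin.sum_univ_eq_sum_range]
        refine Finset.sum_congr rfl fun i _ => ?_
        simp only [Fin.lt_def]
      rw [h1]
      rw [← Finset.sum_subset (Finset.range_subset_range.2 (le_of_lt j.isLt))
        (fun x _ hx => by
          rw [if_neg]
          simp only [Finset.mem_range, not_lt] at hx
          omega)]
      show _ = (Surj (j : ℕ) (m + 1) : k) * α ^ (j : ℕ)
      simp only [Surj, Nat.cast_sum, Nat.cast_mul, Finset.sum_mul]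
      refine Finset.sum_congr rfl fun i hi => ?_
      simp only [Finset.mem_range] at hi
      rw [if_pos hi]
      have : α ^ (i : ℕ) * α ^ ((j : ℕ) - i) = α ^ (j : ℕ) := by
        rw [← pow_add]; congr 1; omega
      rw [show ((Surj i m : k) * α ^ i) * ((Nat.choose (j : ℕ) i : k) * α ^ ((j : ℕ) - i))
          = ((Nat.choose (j : ℕ) i : k) * (Surj i m : k)) * (α ^ i * α ^ ((j : ℕ) - i)) from by
        ring, this]
  rw [key (p - 1)]
  funext j
  rcases eq_or_ne j ⟨p - 1, by omega⟩ with h | h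
  · subst h
    rw [Pi.single_eq_same]
    simp [surj_diag]
  · rw [Pi.single_eq_of_ne h]
    have hj : (j : ℕ) < p - 1 := by
      have h2 := j.isLt
      by_contra h3
      exact h (Fin.ext (by simp only [Fin.val_mk]; omega))
    rw [surj_eq_zero _ _ hj]
    simp
end
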